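/- Let a, b, c, d ∈ ℝ with ad − bc = D where D ∈ {−1, 1}, and let g(x) := (ax+b)/(cx+d). Let x, η ∈ ℝ with x ≠ η, cx + d ≠ 0 and cη + d ≠ 0, and set ξ := 2D/(x − η), x' := g(x), and ξ' := D·(cx+d)²·ξ − 2c·(cx+d). Then ξ' = 2(cx+d)(cη+d)/(x − η); in particular ξ' ≠ 0, and x' − 2D/ξ' = g(η). Hence in the coordinates (x, η) with η = x − 2D/ξ, the map (x,ξ) ↦ (g(x), D(cx+d)²ξ − 2c(cx+d)) becomes the decoupled map (x,η) ↦ (g(x), g(η)). -/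

import Mathlib

/-- decoupling change of variables for the canonical map of a Möbius
transformation `g(x) = (ax+b)/(cx+d)` with `ad − bc = D = ±1`. With `ξ = 2D/(x−η)`,
`x' = g(x)` and `ξ' = D(cx+d)²ξ − 2c(cx+d)`, one has `ξ' = 2(cx+d)(cη+d)/(x−η)`,
`ξ' ≠ 0`, and `x' − 2D/ξ' = g(η)`; i.e. in the coordinates `(x,η)` the map becomes
`(x,η) ↦ (g(x), g(η))`. -/
theorem mobius_decoupled_coordinates
    (a b c d D : ℝ) (hD : D = 1 ∨ D = -1) (hdet : a * d - b * c = D)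
    (x η : ℝ) (hxη : x ≠ η) (h1 : c * x + d ≠ 0) (h2 : c * η + d ≠ 0) :
    D * (c * x + d) ^ 2 * (2 * D / (x - η)) - 2 * c * (c * x + d)
        = 2 * (c * x + d) * (c * η + d) / (x - η) ∧
    D * (c * x + d) ^ 2 * (2 * D / (x - η)) - 2 * c * (c * x + d) ≠ 0 ∧
    (a * x + b) / (c * x + d) -
        2 * D / (D * (c * x + d) ^ 2 * (2 * D / (x - η)) - 2 * c * (c * x + d))
      = (a * η + b) / (c * η + d) := by
  have hD2 : D ^ 2 = 1 := by rcases hD with h | h <;> simp [h]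
  have hxe : x - η ≠ 0 := sub_ne_zero.mpr hxη
  have key : D * (c * x + d) ^ 2 * (2 * D / (x - η)) - 2 * c * (c * x + d)
      = 2 * (c * x + d) * (c * η + d) / (x - η) := by
    field_simp
    linear_combination (c*x+d) * hD2
  have hne : D * (c * x + d) ^ 2 * (2 * D / (x - η)) - 2 * c * (c * x + d) ≠ 0 := by
    rw [key]
    exact div_ne_zero (mul_ne_zero (mul_ne_zero two_ne_zero h1) h2) hxe
  refine ⟨key, hne, ?_⟩
  rw [key]
  have h3 : 2 * (c * x + d) * (c * η + d) / (x - η) ≠ 0 :=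
    div_ne_zero (mul_ne_zero (mul_ne_zero two_ne_zero h1) h2) hxe
  field_simp
  rw [div_eq_iff (by rwa [mul_comm x c])]
  linear_combination (x-η) * hdet
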